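/- Let (a_n)_{n≥1} and (b_n)_{n≥1} be nonnegative real sequences such that ∑_{n=1}^∞ a_n < ∞ and ∑_{n=1}^∞ b_n = ∞. Then there exists a strictly increasing sequence of indices (n_k)_{k≥1} such that ∑_{k=1}^∞ b_{n_k} = ∞ and a_{n_k} = o(b_{n_k}) as k → ∞. -/

import Mathlib

open Filter

/-- `a k = o(b k)` as `k → ∞`: for every `ε > 0` eventually `a k ≤ ε * b k`. -/
def IsLittleO (a b : ℕ → ℝ) : Prop := ∀ ε : ℝ, 0 < ε → ∃ N, ∀ k, N ≤ k → a k ≤ ε * b k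

/-- If `∑ a_n < ∞` and `∑ b_n = ∞`, then along some subsequence
`∑ b_{n_k} = ∞` and `a_{n_k} = o(b_{n_k})`. -/
theorem stmt_8 (a b : ℕ → ℝ) (ha : ∀ m, 0 ≤ a m) (hb : ∀ m, 0 ≤ b m)
    (hasum : Summable a) (hbsum : ¬ Summable b) :
    ∃ n : ℕ → ℕ, StrictMono n ∧ (¬ Summable (fun k => b (n k))) ∧
      IsLittleO (fun k => a (n k)) (fun k => b (n k)) := by
  -- tail sums
  set T : ℕ → ℝ := fun m => ∑' k, a (k + m) with hT
  have hsummT : ∀ m, Summable (fun k => a (k + m)) := fun m => (summable_nat_add_iff m).2 hasum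
  have hT0 : ∀ m, 0 ≤ T m := fun m => tsum_nonneg (fun k => ha _)
  have hTrec : ∀ m, T m = a m + T (m + 1) := by
    intro m
    have h1 : T m = a (0 + m) + ∑' k, a (k + 1 + m) := Summable.tsum_eq_zero_add (hsummT m)
    have h2 : (fun k => a (k + 1 + m)) = fun k => a (k + (m + 1)) := by
      funext k; congr 1; omega
    simpa [h2] using h1
  have haT : ∀ m, a m ≤ T m := by
    intro m
    have := hTrec m
    have := hT0 (m + 1)
    linarith
  have hTanti : Antitone T := by
    apply antitone_nat_of_succ_le
    intro m
    have := hTrec m; have := ha m; linarith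
  have hTtend : Tendsto T atTop (nhds 0) := tendsto_sum_nat_add a
  -- the selected set of indices
  set p : ℕ → Prop := fun m => a m ≤ Real.sqrt (T m) * b m with hp
  -- on the complement, b is dominated by a telescoping summable sequence
  have hcompbound : ∀ m, ¬ p m → b m ≤ 2 * (Real.sqrt (T m) - Real.sqrt (T (m + 1))) := by
    intro m hm
    simp only [hp, not_le] at hm
    set u := Real.sqrt (T m)
    set v := Real.sqrt (T (m + 1))
    have hu0 : 0 ≤ u := Real.sqrt_nonneg _
    have hv0 : 0 ≤ v := Real.sqrt_nonneg _
    have hu2 : u * u = T m := Real.mul_self_sqrt (hT0 m)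
    have hv2 : v * v = T (m + 1) := Real.mul_self_sqrt (hT0 (m + 1))
    have huv : v ≤ u := Real.sqrt_le_sqrt (hTanti (Nat.le_succ m))
    have hupos : 0 < u := by
      rcases lt_or_eq_of_le hu0 with h | h
      · exact h
      · exfalso
        have hTm : T m = 0 := by rw [← hu2, ← h]; ring
        have : a m ≤ 0 := hTm ▸ haT m
        have : a m = 0 := le_antisymm this (ha m)
        have hbm := hb m
        nlinarith
    have hrec := hTrec m
    -- b m * u < a m = T m - T (m+1) = (u - v)(u + v) ≤ 2u(u - v)
    have h1 : b m * u < a m := by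
      have := mul_lt_mul_of_pos_right hm hupos
      calc b m * u = u * b m := by ring
        _ < a m := by nlinarith
    nlinarith
  have hg : Summable (fun m => 2 * (Real.sqrt (T m) - Real.sqrt (T (m + 1)))) := by
    apply summable_of_sum_range_le (c := 2 * Real.sqrt (T 0))
    · intro m
      have : Real.sqrt (T (m + 1)) ≤ Real.sqrt (T m) :=
        Real.sqrt_le_sqrt (hTanti (Nat.le_succ m))
      linarith
    · intro n
      have := Finset.sum_range_sub' (fun i => 2 * Real.sqrt (T i)) n
      simp only [mul_sub] at *
      rw [this]
      have : 0 ≤ Real.sqrt (T n) := Real.sqrt_nonneg _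
      linarith
  have hScomp : Summable ((setOf p)ᶜ.indicator b) := by
    apply hg.of_nonneg_of_le
    · intro m; exact Set.indicator_nonneg (fun x _ => hb x) m
    · intro m
      by_cases hm : m ∈ (setOf p)ᶜ
      · rw [Set.indicator_of_mem hm]
        exact hcompbound m hm
      · rw [Set.indicator_of_notMem hm]
        have : Real.sqrt (T (m + 1)) ≤ Real.sqrt (T m) :=
          Real.sqrt_le_sqrt (hTanti (Nat.le_succ m))
        linarith
  have hSind : ¬ Summable ((setOf p).indicator b) := by
    intro hS
    apply hbsum
    have := hS.add hScomp
    simpa [Set.indicator_self_add_compl (setOf p) b] using this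
  have hSinf : (setOf p).Infinite := by
    by_contra hfin
    rw [Set.not_infinite] at hfin
    exact hSind (summable_of_ne_finset_zero (s := hfin.toFinset)
      (fun m hm => Set.indicator_of_notMem (by simpa using hm) b))
  -- the subsequence
  refine ⟨Nat.nth p, Nat.nth_strictMono hSinf, ?_, ?_⟩
  · -- not summable along subsequence
    intro hsum
    apply hSind
    have hinj : Function.Injective (Nat.nth p) := (Nat.nth_strictMono hSinf).injective
    rw [← hinj.summable_iff (f := (setOf p).indicator b)
      (fun x hx => Set.indicator_of_notMem (by rwa [Nat.range_nth_of_infinite hSinf] at hx) b)]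
    have : ((setOf p).indicator b ∘ Nat.nth p) = fun k => b (Nat.nth p k) := by
      funext k
      simp only [Function.comp_apply]
      exact Set.indicator_of_mem (show Nat.nth p k ∈ setOf p from Nat.nth_mem_of_infinite hSinf k) b
    rwa [this]
  · -- little-o
    intro ε hε
    have : ∀ᶠ m in atTop, Real.sqrt (T m) < ε := by
      have hsq : Tendsto (fun m => Real.sqrt (T m)) atTop (nhds 0) := by
        have := (Real.continuous_sqrt.tendsto 0).comp hTtend
        simpa [Function.comp_def] using this
      have := hsq.eventually (eventually_lt_nhds (by positivity : (0:ℝ) < ε))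
      simpa using this
    rcases eventually_atTop.1 this with ⟨N, hN⟩
    refine ⟨N, fun k hk => ?_⟩
    have hmem : p (Nat.nth p k) := Nat.nth_mem_of_infinite hSinf k
    have hkle : k ≤ Nat.nth p k := (Nat.nth_strictMono hSinf).le_apply
    have h1 : Real.sqrt (T (Nat.nth p k)) ≤ Real.sqrt (T k) :=
      Real.sqrt_le_sqrt (hTanti hkle)
    have h2 : Real.sqrt (T k) < ε := hN k hk
    calc a (Nat.nth p k) ≤ Real.sqrt (T (Nat.nth p k)) * b (Nat.nth p k) := hmem
      _ ≤ ε * b (Nat.nth p k) := by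
          apply mul_le_mul_of_nonneg_right _ (hb _)
          linarith
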